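/- Let (A,≻,≺) be a dendriform algebra, (l_≻,r_≻,l_≺,r_≺,V) a bimodule of (A,≻,≺), and T : V → A an O-operator associated to this bimodule. Define four bilinear products on V by u↘v = l_≻(T(u))v, u↗v = r_≻(T(v))u, u↙v = l_≺(T(u))v, u↖v = r_≺(T(v))u. Then (V,↘,↗,↖,↙) is a quadri-algebra, and T is a homomorphism of dendriform algebras from the associated horizontal dendriform algebra of V (with products u≻v = u↗v + u↘v and u≺v = u↖v + u↙v) to (A,≻,≺). -/
import Mathlib


open LinearMap

/-- Dendriform algebra axioms for a pair of bilinear products `succ` (≻) and `prec` (≺). -/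
def IsDendriform {K A : Type*} [Field K] [AddCommGroup A] [Module K A]
    (succ prec : A →ₗ[K] A →ₗ[K] A) : Prop :=
  (∀ x y z : A, prec (prec x y) z = prec x (succ y z + prec y z)) ∧
  (∀ x y z : A, prec (succ x y) z = succ x (prec y z)) ∧
  (∀ x y z : A, succ x (succ y z) = succ (succ x y + prec x y) z)

/-- Bimodule of a dendriform algebra `(A, succ, prec)` on `V`
(maps `l_≻ = ls`, `r_≻ = rs`, `l_≺ = lp`, `r_≺ = rp`). -/
def IsDendBimodule {K A V : Type*} [Field K] [AddCommGroup A] [Module K A]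
    [AddCommGroup V] [Module K V] (succ prec : A →ₗ[K] A →ₗ[K] A)
    (ls rs lp rp : A →ₗ[K] V →ₗ[K] V) : Prop :=
  (∀ x y : A, lp (prec x y) = lp x ∘ₗ (lp y + ls y)) ∧
  (∀ x y : A, rp x ∘ₗ lp y = lp y ∘ₗ (rp x + rs x)) ∧
  (∀ x y : A, rp x ∘ₗ rp y = rp (succ y x + prec y x)) ∧
  (∀ x y : A, lp (succ x y) = ls x ∘ₗ lp y) ∧
  (∀ x y : A, rp x ∘ₗ ls y = ls y ∘ₗ rp x) ∧
  (∀ x y : A, rp x ∘ₗ rs y = rs (prec y x)) ∧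
  (∀ x y : A, ls (succ x y + prec x y) = ls x ∘ₗ ls y) ∧
  (∀ x y : A, rs x ∘ₗ (lp y + ls y) = ls y ∘ₗ rs x) ∧
  (∀ x y : A, rs x ∘ₗ (rs y + rp y) = rs (succ y x))

/-- Quadri-algebra axioms for the four products ↘ (`dse`), ↗ (`dne`), ↖ (`dnw`), ↙ (`dsw`). -/
def IsQuadri {K A : Type*} [Field K] [AddCommGroup A] [Module K A]
    (dse dne dnw dsw : A →ₗ[K] A →ₗ[K] A) : Prop :=
  (∀ x y z : A, dnw (dnw x y) z = dnw x (dse y z + dne y z + dnw y z + dsw y z)) ∧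
  (∀ x y z : A, dnw (dne x y) z = dne x (dnw y z + dsw y z)) ∧
  (∀ x y z : A, dne (dne x y + dnw x y) z = dne x (dne y z + dse y z)) ∧
  (∀ x y z : A, dnw (dsw x y) z = dsw x (dne y z + dnw y z)) ∧
  (∀ x y z : A, dnw (dse x y) z = dse x (dnw y z)) ∧
  (∀ x y z : A, dne (dse x y + dsw x y) z = dse x (dne y z)) ∧
  (∀ x y z : A, dsw (dnw x y + dsw x y) z = dsw x (dse y z + dsw y z)) ∧
  (∀ x y z : A, dsw (dne x y + dse x y) z = dse x (dsw y z)) ∧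
  (∀ x y z : A, dse (dse x y + dne x y + dnw x y + dsw x y) z = dse x (dse y z))

/-- Proposition 3.4.6: if `T : V → A` is an `O`-operator of a dendriform algebra
`(A, ≻, ≺)` associated to a bimodule `(l_≻, r_≻, l_≺, r_≺, V)`, then the products
`u↘v = l_≻(T u) v`, `u↗v = r_≻(T v) u`, `u↙v = l_≺(T u) v`, `u↖v = r_≺(T v) u` make
`V` a quadri-algebra, and `T` is a homomorphism from the associated horizontal
dendriform algebra of `V` to `(A, ≻, ≺)`. -/
theorem Ooperator_dendriform_gives_quadri
    {K A V : Type*} [Field K] [CharZero K] [AddCommGroup A] [Module K A]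
    [AddCommGroup V] [Module K V]
    (succ prec : A →ₗ[K] A →ₗ[K] A)
    (hdend : IsDendriform succ prec)
    (ls rs lp rp : A →ₗ[K] V →ₗ[K] V)
    (hbim : IsDendBimodule succ prec ls rs lp rp)
    (T : V →ₗ[K] A)
    (hT1 : ∀ u v : V, succ (T u) (T v) = T (ls (T u) v + rs (T v) u))
    (hT2 : ∀ u v : V, prec (T u) (T v) = T (lp (T u) v + rp (T v) u)) :
    IsQuadri (ls ∘ₗ T) (rs ∘ₗ T).flip (rp ∘ₗ T).flip (lp ∘ₗ T) ∧
    (∀ u v : V, T ((rs ∘ₗ T).flip u v + (ls ∘ₗ T) u v) = succ (T u) (T v)) ∧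
    (∀ u v : V, T ((rp ∘ₗ T).flip u v + (lp ∘ₗ T) u v) = prec (T u) (T v)) := by
  obtain ⟨b1, b2, b3, b4, b5, b6, b7, b8, b9⟩ := hbim
  have star : ∀ y z : V, T (ls (T y) z + rs (T z) y + rp (T z) y + lp (T y) z)
      = succ (T y) (T z) + prec (T y) (T z) := by
    intro y z
    rw [hT1, hT2, ← map_add]
    congr 1; abel
  have hsucc : ∀ y z : V, T (rs (T z) y + ls (T y) z) = succ (T y) (T z) := by
    intro y z; rw [hT1]; congr 1; abel
  have hprec : ∀ y z : V, T (rp (T z) y + lp (T y) z) = prec (T y) (T z) := by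
    intro y z; rw [hT2]; congr 1; abel
  refine ⟨⟨fun x y z => ?_, fun x y z => ?_, fun x y z => ?_, fun x y z => ?_,
    fun x y z => ?_, fun x y z => ?_, fun x y z => ?_, fun x y z => ?_, fun x y z => ?_⟩,
    fun u v => ?_, fun u v => ?_⟩ <;>
    simp only [comp_apply, flip_apply]
  · -- Q1
    rw [star y z]
    simpa using DFunLike.congr_fun (b3 (T z) (T y)) x
  · -- Q2
    rw [hprec y z]
    simpa using DFunLike.congr_fun (b6 (T z) (T y)) x
  · -- Q3
    rw [hsucc y z]
    simpa using DFunLike.congr_fun (b9 (T z) (T y)) x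
  · -- Q4
    rw [show rs (T z) y + rp (T z) y = rp (T z) y + rs (T z) y from add_comm _ _]
    simpa using DFunLike.congr_fun (b2 (T z) (T x)) y
  · -- Q5
    simpa using DFunLike.congr_fun (b5 (T z) (T x)) y
  · -- Q6
    rw [show ls (T x) y + lp (T x) y = lp (T x) y + ls (T x) y from add_comm _ _]
    simpa using DFunLike.congr_fun (b8 (T z) (T x)) y
  · -- Q7
    rw [hprec x y, show ls (T y) z + lp (T y) z = lp (T y) z + ls (T y) z from add_comm _ _]
    simpa using DFunLike.congr_fun (b1 (T x) (T y)) z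
  · -- Q8
    rw [hsucc x y]
    simpa using DFunLike.congr_fun (b4 (T x) (T y)) z
  · -- Q9
    rw [star x y]
    simpa using DFunLike.congr_fun (b7 (T x) (T y)) z
  · exact hsucc u v
  · exact hprec u v
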